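/- Let G and H be finite connected simple graphs, each with at least two vertices, and let S_G and S_H be feasible total mutual-visibility sets of G and H, respectively. Then the set S = (V(G) × V(H)) \ ((V(G) \ S_G) × (V(H) \ S_H)) is a feasible total mutual-visibility set of the strong product G ⊠ H; in particular there exists a feasible total mutual-visibility set S of G ⊠ H with |S| ≥ |S_G|·n(H) + |S_H|·n(G) − |S_G|·|S_H|. -/

import Mathlib

open SimpleGraph

/-- Vertices `x` and `y` are `X`-visible in `G`: some shortest `x,y`-path has
no internal vertex in `X`. -/
def Visible {V : Type*} (G : SimpleGraph V) (X : Set V) (x y : V) : Prop :=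
  ∃ p : G.Walk x y, p.length = G.dist x y ∧ ∀ v ∈ p.support, v ∈ X → v = x ∨ v = y

/-- `X` is a mutual-visibility set of `G`: every two vertices of `X` are `X`-visible. -/
def IsMVSet {V : Type*} (G : SimpleGraph V) (X : Set V) : Prop :=
  ∀ x ∈ X, ∀ y ∈ X, Visible G X x y

/-- `X` is a total mutual-visibility set of `G`: every two vertices of `G` are
`X`-visible. -/
def IsTMVSet {V : Type*} (G : SimpleGraph V) (X : Set V) : Prop :=
  ∀ x y : V, Visible G X x y

/-- The mutual-visibility number of `G`: the maximum cardinality of a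
mutual-visibility set. -/
noncomputable def mu {V : Type*} (G : SimpleGraph V) : ℕ :=
  sSup {n | ∃ X : Set V, IsMVSet G X ∧ X.ncard = n}

/-- The total mutual-visibility number of `G`: the maximum cardinality of a total
mutual-visibility set. -/
noncomputable def muT {V : Type*} (G : SimpleGraph V) : ℕ :=
  sSup {n | ∃ X : Set V, IsTMVSet G X ∧ X.ncard = n}

/-- A feasible total mutual-visibility set: a total mutual-visibility set `S` such that
any two adjacent vertices of `S` have a common neighbor outside `S`. -/
def IsFeasibleTMVSet {V : Type*} (G : SimpleGraph V) (S : Set V) : Prop :=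
  IsTMVSet G S ∧ ∀ x ∈ S, ∀ y ∈ S, G.Adj x y → ∃ z ∉ S, G.Adj x z ∧ G.Adj y z

/-- The strong product of two simple graphs. -/
def strongProd {α β : Type*} (G : SimpleGraph α) (H : SimpleGraph β) :
    SimpleGraph (α × β) where
  Adj x y := (G.Adj x.1 y.1 ∧ x.2 = y.2) ∨ (x.1 = y.1 ∧ H.Adj x.2 y.2) ∨
    (G.Adj x.1 y.1 ∧ H.Adj x.2 y.2)
  symm := ⟨by
    rintro ⟨a, b⟩ ⟨c, d⟩ (⟨h1, h2⟩ | ⟨h1, h2⟩ | ⟨h1, h2⟩)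
    · exact Or.inl ⟨h1.symm, h2.symm⟩
    · exact Or.inr (Or.inl ⟨h1.symm, h2.symm⟩)
    · exact Or.inr (Or.inr ⟨h1.symm, h2.symm⟩)⟩
  loopless := ⟨by
    rintro ⟨a, b⟩ (⟨h, _⟩ | ⟨_, h⟩ | ⟨h, _⟩)
    · exact G.ne_of_adj h rfl
    · exact H.ne_of_adj h rfl
    · exact G.ne_of_adj h rfl⟩

/-- The iterated (associative) strong product of a finite family of graphs:
two tuples are adjacent iff they are distinct and agree or are adjacent in every
coordinate. -/
def strongProdPi {k : ℕ} {V : Fin k → Type*} (G : ∀ i, SimpleGraph (V i)) :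
    SimpleGraph (∀ i, V i) where
  Adj x y := x ≠ y ∧ ∀ i, x i = y i ∨ (G i).Adj (x i) (y i)
  symm := ⟨by
    rintro x y ⟨hne, h⟩
    exact ⟨hne.symm, fun i => (h i).imp Eq.symm fun hh => hh.symm⟩⟩
  loopless := ⟨fun x h => h.1 rfl⟩

/-- A universal vertex: adjacent to all other vertices. -/
def IsUniversal {V : Type*} (G : SimpleGraph V) (v : V) : Prop :=
  ∀ u : V, u ≠ v → G.Adj v u

/-- A cut vertex: its removal disconnects the graph. -/
def IsCutVertex {V : Type*} (G : SimpleGraph V) (v : V) : Prop :=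
  ¬ (G.induce ({v}ᶜ : Set V)).Preconnected

/-- An induced path: a path with no chords between its vertices. -/
def IsInducedPath {V : Type*} (G : SimpleGraph V) {u v : V} (p : G.Walk u v) : Prop :=
  p.IsPath ∧ ∀ a b : V, a ∈ p.support → b ∈ p.support → G.Adj a b → s(a, b) ∈ p.edges

/-- A block graph: a connected graph in which every pair of vertices is joined
by a unique induced path. -/
def IsBlockGraph {V : Type*} (G : SimpleGraph V) : Prop :=
  G.Connected ∧ ∀ u v : V, ∃! p : G.Walk u v, IsInducedPath G p

/-- A convex set of vertices: every shortest path of `G` between two of its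
vertices stays inside the set. -/
def IsConvexSet {V : Type*} (G : SimpleGraph V) (A : Set V) : Prop :=
  ∀ x ∈ A, ∀ y ∈ A, ∀ p : G.Walk x y, p.length = G.dist x y → ∀ v ∈ p.support, v ∈ A

/-- A cactus graph: a connected graph in which every edge lies in at most one cycle,
i.e. two cycles sharing an edge have the same edge set. -/
def IsCactus {V : Type*} (G : SimpleGraph V) : Prop :=
  G.Connected ∧ ∀ (v : V) (p q : G.Walk v v), p.IsCycle → q.IsCycle →
    ∀ e, e ∈ p.edges → e ∈ q.edges → ∀ e', e' ∈ p.edges ↔ e' ∈ q.edges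

/-- A cograph: obtained from a single vertex by repeatedly adding twins, i.e. there is
an enumeration of the vertices in which every vertex except the first is, at the
moment of its addition, a (true or false) twin of some earlier vertex in the induced
subgraph on the vertices added so far. -/
def IsCograph {V : Type*} (G : SimpleGraph V) : Prop :=
  ∃ l : List V, l.Nodup ∧ (∀ v : V, v ∈ l) ∧
    ∀ i : Fin l.length, (i : ℕ) ≠ 0 →
      ∃ j : Fin l.length, (j : ℕ) < (i : ℕ) ∧
        ∀ z ∈ l.take ((i : ℕ) + 1), z ≠ l.get i → z ≠ l.get j →
          (G.Adj (l.get i) z ↔ G.Adj (l.get j) z)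

/-- An enabling vertex: a vertex `v` adjacent to every vertex `u` of `G - v` whose
degree in `G - v` is less than `n(G) - 2`. -/
def IsEnabling {V : Type*} [Fintype V] (G : SimpleGraph V) (v : V) : Prop :=
  ∀ u : V, u ≠ v → (G.neighborSet u \ {v}).ncard < Fintype.card V - 2 → G.Adj v u


section AuxLemmas


/-- Build a walk from a step sequence. -/
lemma my_seq_to_walk {V : Type*} (Γ : SimpleGraph V) (f : ℕ → V) :
    ∀ n : ℕ, (∀ i < n, Γ.Adj (f i) (f (i + 1))) →
      ∃ p : Γ.Walk (f 0) (f n), p.length = n ∧ ∀ v ∈ p.support, ∃ i ≤ n, f i = v := by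
  intro n
  induction n with
  | zero => exact fun _ => ⟨Walk.nil, rfl, by simp⟩
  | succ n ih =>
    intro hstep
    obtain ⟨p, hlen, hsup⟩ := ih (fun i hi => hstep i (by omega))
    refine ⟨p.concat (hstep n (by omega)), by simp [hlen], ?_⟩
    intro v hv
    rw [Walk.support_concat, List.mem_append] at hv
    rcases hv with hv | hv
    · obtain ⟨i, hi, hfi⟩ := hsup v hv; exact ⟨i, by omega, hfi⟩
    · simp only [List.mem_singleton] at hv
      exact ⟨n + 1, le_refl _, hv.symm⟩

lemma my_exists_walk_from_getVert {V : Type*} {Γ : SimpleGraph V} :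
    ∀ {u v : V} (q : Γ.Walk u v) (j : ℕ),
      ∃ r : Γ.Walk (q.getVert j) v, r.length = q.length - j := by
  intro u v q
  induction q with
  | nil =>
    intro j
    exact ⟨Walk.nil.copy (Walk.getVert_of_length_le _ (by simp)).symm rfl, by simp⟩
  | cons h p ih =>
    intro j
    cases j with
    | zero => exact ⟨(Walk.cons h p).copy (Walk.getVert_zero _).symm rfl, by simp⟩
    | succ j =>
      obtain ⟨r, hr⟩ := ih j
      refine ⟨r.copy (Walk.getVert_cons_succ _ _).symm rfl, ?_⟩
      simp [hr]

lemma my_exists_walk_to_getVert {V : Type*} {Γ : SimpleGraph V} :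
    ∀ {u v : V} (q : Γ.Walk u v) (j : ℕ),
      ∃ r : Γ.Walk u (q.getVert j), r.length = min j q.length := by
  intro u v q
  induction q with
  | nil =>
    intro j
    exact ⟨Walk.nil.copy rfl (Walk.getVert_of_length_le _ (by simp)).symm, by simp⟩
  | cons h p ih =>
    intro j
    cases j with
    | zero => exact ⟨Walk.nil.copy rfl (Walk.getVert_zero _).symm, by simp⟩
    | succ j =>
      obtain ⟨r, hr⟩ := ih j
      refine ⟨(r.cons h).copy rfl (Walk.getVert_cons_succ _ _).symm, ?_⟩
      simp only [Walk.length_copy, Walk.length_cons, Walk.length_cons, hr]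
      omega

lemma my_getVert_internal_not_mem {V : Type*} {Γ : SimpleGraph V} {X : Set V} {u v : V}
    (q : Γ.Walk u v) (hq : q.length = Γ.dist u v)
    (hint : ∀ w ∈ q.support, w ∈ X → w = u ∨ w = v)
    {j : ℕ} (h0 : 0 < j) (hj : j < q.length) : q.getVert j ∉ X := by
  intro hmem
  have hsup : q.getVert j ∈ q.support :=
    Walk.mem_support_iff_exists_getVert.mpr ⟨j, rfl, by omega⟩
  rcases hint _ hsup hmem with he | he
  · obtain ⟨r, hr⟩ := my_exists_walk_from_getVert q j
    have := SimpleGraph.dist_le (r.copy he rfl)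
    rw [Walk.length_copy, hr] at this
    omega
  · obtain ⟨r, hr⟩ := my_exists_walk_to_getVert q j
    have := SimpleGraph.dist_le (r.copy rfl he)
    rw [Walk.length_copy, hr] at this
    omega


lemma my_exists_nbr_out {β : Type*} {H : SimpleGraph β} (hH : H.Connected)
    (hnt : Nontrivial β) {SH : Set β}
    (hfeas : ∀ x ∈ SH, ∀ y ∈ SH, H.Adj x y → ∃ z ∉ SH, H.Adj x z ∧ H.Adj y z)
    (h : β) (hh : h ∈ SH) : ∃ z ∉ SH, H.Adj h z := by
  obtain ⟨u, hu⟩ := exists_ne h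
  obtain ⟨w, hw⟩ := (hH.preconnected h u).exists_walk_length_eq_dist
  have hpos : 0 < w.length := by
    rw [hw]
    exact hH.pos_dist_of_ne hu.symm
  have hadj : H.Adj h (w.getVert 1) := by
    have := w.adj_getVert_succ hpos
    rwa [w.getVert_zero] at this
  by_cases hmem : w.getVert 1 ∈ SH
  · obtain ⟨z, hz, hz1, _⟩ := hfeas h hh _ hmem hadj
    exact ⟨z, hz, hz1⟩
  · exact ⟨_, hmem, hadj⟩

lemma my_pair_out {α : Type*} {G : SimpleGraph α} (hG : G.Connected)
    (hnt : Nontrivial α) {SG : Set α} (hSG : IsFeasibleTMVSet G SG) (g g' : α)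
    (hrel : g = g' ∨ G.Adj g g') :
    ∃ z ∉ SG, (z = g ∨ G.Adj g z) ∧ (z = g' ∨ G.Adj g' z) := by
  by_cases hg : g ∈ SG
  · by_cases hg' : g' ∈ SG
    · rcases hrel with rfl | hadj
      · obtain ⟨z, hz, hadj⟩ := my_exists_nbr_out hG hnt hSG.2 g hg
        exact ⟨z, hz, Or.inr hadj, Or.inr hadj⟩
      · obtain ⟨z, hz, h1, h2⟩ := hSG.2 g hg g' hg' hadj
        exact ⟨z, hz, Or.inr h1, Or.inr h2⟩
    · refine ⟨g', hg', ?_, Or.inl rfl⟩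
      rcases hrel with rfl | hadj
      · exact Or.inl rfl
      · exact Or.inr hadj
  · refine ⟨g, hg, Or.inl rfl, ?_⟩
    rcases hrel with rfl | hadj
    · exact Or.inl rfl
    · exact Or.inr hadj.symm

lemma my_lazySeq {β : Type*} {H : SimpleGraph β} (hH : H.Connected)
    (hnt : Nontrivial β) {SH : Set β} (hSH : IsFeasibleTMVSet H SH)
    (h h' : β) (L : ℕ) (hL2 : 2 ≤ L) (hLb : H.dist h h' ≤ L) :
    ∃ s : ℕ → β, s 0 = h ∧ s L = h' ∧
      (∀ i < L, s i = s (i + 1) ∨ H.Adj (s i) (s (i + 1))) ∧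
      (∀ i, 0 < i → i < L → s i ∉ SH) := by
  set b := H.dist h h' with hb
  rcases Nat.lt_or_ge b 2 with hbs | hb2
  · interval_cases b
    · have heq : h = h' := (hH.dist_eq_zero_iff).mp hb.symm
      subst heq
      by_cases hh : h ∈ SH
      · obtain ⟨z, hz, hadj⟩ := my_exists_nbr_out hH hnt hSH.2 h hh
        refine ⟨fun i => if i = 0 ∨ L ≤ i then h else z, ?_, ?_, ?_, ?_⟩
        · dsimp only; split_ifs with h1 <;> first | rfl | omega
        · dsimp only; split_ifs with h1 <;> first | rfl | omega
        · intro i hi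
          dsimp only
          split_ifs <;>
            first | exact Or.inl rfl | exact Or.inr hadj | exact Or.inr hadj.symm | omega
        · intro i h0 hiL
          dsimp only
          split_ifs <;> first | exact hz | omega
      · exact ⟨fun _ => h, rfl, rfl, fun i _ => Or.inl rfl, fun _ _ _ => hh⟩
    · have hadj : H.Adj h h' := SimpleGraph.dist_eq_one_iff_adj.mp hb.symm
      by_cases hh : h ∈ SH
      · by_cases hh' : h' ∈ SH
        · obtain ⟨z, hz, hz1, hz2⟩ := hSH.2 h hh h' hh' hadj
          refine ⟨fun i => if i = 0 then h else if L ≤ i then h' else z, ?_, ?_, ?_, ?_⟩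
          · dsimp only; split_ifs <;> first | rfl | omega
          · dsimp only; split_ifs <;> first | rfl | omega
          · intro i hi
            dsimp only
            split_ifs <;>
              first
              | exact Or.inl rfl
              | exact Or.inr hadj
              | exact Or.inr hadj.symm
              | exact Or.inr hz1
              | exact Or.inr hz1.symm
              | exact Or.inr hz2
              | exact Or.inr hz2.symm
              | omega
          · intro i h0 hiL
            dsimp only
            split_ifs <;> first | exact hz | omega
        · refine ⟨fun i => if i = 0 then h else h', ?_, ?_, ?_, ?_⟩
          · dsimp only; split_ifs <;> first | rfl | omega
          · dsimp only; split_ifs <;> first | rfl | omega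
          · intro i hi
            dsimp only
            split_ifs <;> first | exact Or.inl rfl | exact Or.inr hadj | exact Or.inr hadj.symm | omega
          · intro i h0 hiL
            dsimp only
            split_ifs <;> first | exact hh' | omega
      · refine ⟨fun i => if L ≤ i then h' else h, ?_, ?_, ?_, ?_⟩
        · dsimp only; split_ifs <;> first | rfl | omega
        · dsimp only; split_ifs <;> first | rfl | omega
        · intro i hi
          dsimp only
          split_ifs <;> first | exact Or.inl rfl | exact Or.inr hadj | exact Or.inr hadj.symm | omega
        · intro i h0 hiL
          dsimp only
          split_ifs <;> first | exact hh | omega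
  · obtain ⟨q, hq, hint⟩ := hSH.1 h h'
    have hqlen : q.length = b := hq
    refine ⟨fun i => q.getVert (max (min i 1) (i - (L - b))), ?_, ?_, ?_, ?_⟩
    · simp
    · have hidx : max (min L 1) (L - (L - b)) = q.length := by omega
      dsimp only
      rw [hidx]
      exact q.getVert_length
    · intro i hi
      dsimp only
      have hcase : (max (min (i + 1) 1) (i + 1 - (L - b))) = (max (min i 1) (i - (L - b))) ∨
          ((max (min (i + 1) 1) (i + 1 - (L - b))) = (max (min i 1) (i - (L - b))) + 1 ∧
            (max (min i 1) (i - (L - b))) < q.length) := by omega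
      rcases hcase with hc | ⟨hc, hlt⟩
      · exact Or.inl (by rw [hc])
      · right
        rw [hc]
        exact q.adj_getVert_succ hlt
    · intro i h0 hiL
      dsimp only
      have h1 : 0 < max (min i 1) (i - (L - b)) := by omega
      have h2 : max (min i 1) (i - (L - b)) < q.length := by omega
      exact my_getVert_internal_not_mem q hq hint h1 h2

lemma my_dist_step {γ : Type*} {Γ : SimpleGraph γ} (hc : Γ.Connected) {a b c : γ} {n : ℕ}
    (hab : a = b ∨ Γ.Adj a b) (hbc : Γ.dist b c ≤ n) : Γ.dist a c ≤ n + 1 := by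
  rcases hab with rfl | hab
  · omega
  · have h1 := hc.dist_triangle (u := a) (v := b) (w := c)
    have h2 : Γ.dist a b ≤ 1 := by
      have := SimpleGraph.dist_le hab.toWalk
      simpa using this
    omega

lemma my_dist_proj_le {α β : Type*} {G : SimpleGraph α} {H : SimpleGraph β}
    (hG : G.Connected) (hH : H.Connected) :
    ∀ {x y : α × β} (w : (strongProd G H).Walk x y),
      G.dist x.1 y.1 ≤ w.length ∧ H.dist x.2 y.2 ≤ w.length := by
  intro x y w
  induction w with
  | nil => simp [SimpleGraph.dist_self]
  | @cons x z y hadj w ih =>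
    rw [Walk.length_cons]
    have hrel : (x.1 = z.1 ∨ G.Adj x.1 z.1) ∧ (x.2 = z.2 ∨ H.Adj x.2 z.2) := by
      rcases hadj with ⟨h1, h2⟩ | ⟨h1, h2⟩ | ⟨h1, h2⟩
      · exact ⟨Or.inr h1, Or.inl h2⟩
      · exact ⟨Or.inl h1, Or.inr h2⟩
      · exact ⟨Or.inr h1, Or.inr h2⟩
    exact ⟨my_dist_step hG hrel.1 ih.1, my_dist_step hH hrel.2 ih.2⟩

lemma my_prodWalk {α β : Type*} (G : SimpleGraph α) (H : SimpleGraph β)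
    (hG : G.Connected) (hH : H.Connected) (hntβ : Nontrivial β)
    (SG : Set α) (SH : Set β) (hSG : IsFeasibleTMVSet G SG) (hSH : IsFeasibleTMVSet H SH)
    (g g' : α) (h h' : β) (hba : H.dist h h' ≤ G.dist g g') (hL : 2 ≤ G.dist g g') :
    ∃ w : (strongProd G H).Walk (g, h) (g', h'), w.length = G.dist g g' ∧
      ∀ v ∈ w.support, (v.1 ∈ SG ∨ v.2 ∈ SH) → v = (g, h) ∨ v = (g', h') := by
  set L := G.dist g g' with hLdef
  obtain ⟨q, hq, hintG⟩ := hSG.1 g g'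
  obtain ⟨s, hs0, hsL, hstep, hsint⟩ := my_lazySeq hH hntβ hSH h h' L hL hba
  set f : ℕ → α × β := fun i => (q.getVert i, s i) with hf
  have hadj : ∀ i < L, (strongProd G H).Adj (f i) (f (i + 1)) := by
    intro i hi
    have hGadj : G.Adj (q.getVert i) (q.getVert (i + 1)) :=
      q.adj_getVert_succ (by omega)
    rcases hstep i hi with he | ha
    · exact Or.inl ⟨hGadj, he⟩
    · exact Or.inr (Or.inr ⟨hGadj, ha⟩)
  obtain ⟨p, hplen, hpsup⟩ := my_seq_to_walk (strongProd G H) f L hadj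
  have h0 : f 0 = (g, h) := by simp [hf, hs0]
  have hL' : f L = (g', h') := by
    have : q.getVert L = g' := by
      rw [show L = q.length by omega]
      exact q.getVert_length
    simp [hf, this, hsL]
  refine ⟨(p.copy h0 hL'), by simp [hplen], ?_⟩
  intro v hv hmem
  rw [Walk.support_copy] at hv
  obtain ⟨i, hi, hfi⟩ := hpsup v hv
  rcases Nat.eq_zero_or_pos i with rfl | hpos
  · left; rw [← hfi, h0]
  rcases Nat.lt_or_ge i L with hilt | hige
  · exfalso
    have hg : q.getVert i ∉ SG := my_getVert_internal_not_mem q hq hintG hpos (by omega)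
    have hh : s i ∉ SH := hsint i hpos hilt
    rw [← hfi] at hmem
    simp only [hf] at hmem
    tauto
  · right
    have : i = L := by omega
    rw [← hfi, this, hL']

def mySwapHom {α β : Type*} (G : SimpleGraph α) (H : SimpleGraph β) :
    strongProd H G →g strongProd G H where
  toFun := Prod.swap
  map_rel' := by
    rintro ⟨a, b⟩ ⟨c, d⟩ (⟨h1, h2⟩ | ⟨h1, h2⟩ | ⟨h1, h2⟩)
    · exact Or.inr (Or.inl ⟨h2, h1⟩)
    · exact Or.inl ⟨h2, h1⟩
    · exact Or.inr (Or.inr ⟨h2, h1⟩)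

lemma my_visible_prod {α β : Type*} (G : SimpleGraph α) (H : SimpleGraph β)
    (hG : G.Connected) (hH : H.Connected) (hntα : Nontrivial α) (hntβ : Nontrivial β)
    (SG : Set α) (SH : Set β) (hSG : IsFeasibleTMVSet G SG) (hSH : IsFeasibleTMVSet H SH)
    (x y : α × β) : Visible (strongProd G H) ((SGᶜ ×ˢ SHᶜ)ᶜ) x y := by
  have hmemS : ∀ v : α × β, v ∈ ((SGᶜ ×ˢ SHᶜ)ᶜ : Set (α × β)) ↔ (v.1 ∈ SG ∨ v.2 ∈ SH) := by
    intro v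
    simp only [Set.mem_compl_iff, Set.mem_prod, not_and_or, not_not]
  by_cases hxy : x = y
  · subst hxy
    refine ⟨Walk.nil, by simp [SimpleGraph.dist_self], ?_⟩
    intro v hv _
    simp only [Walk.support_nil, List.mem_singleton] at hv
    exact Or.inl hv
  set a := G.dist x.1 y.1 with ha
  set b := H.dist x.2 y.2 with hb
  rcases Nat.lt_or_ge (max a b) 2 with hsmall | hbig
  · -- x and y are adjacent
    have hadj : (strongProd G H).Adj x y := by
      have h1 : x.1 = y.1 ∨ G.Adj x.1 y.1 := by
        rcases Nat.lt_or_ge a 1 with h | h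
        · exact Or.inl (hG.dist_eq_zero_iff.mp (by omega))
        · exact Or.inr (SimpleGraph.dist_eq_one_iff_adj.mp (by omega))
      have h2 : x.2 = y.2 ∨ H.Adj x.2 y.2 := by
        rcases Nat.lt_or_ge b 1 with h | h
        · exact Or.inl (hH.dist_eq_zero_iff.mp (by omega))
        · exact Or.inr (SimpleGraph.dist_eq_one_iff_adj.mp (by omega))
      rcases h1 with h1 | h1 <;> rcases h2 with h2 | h2
      · exact absurd (Prod.ext h1 h2) hxy
      · exact Or.inr (Or.inl ⟨h1, h2⟩)
      · exact Or.inl ⟨h1, h2⟩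
      · exact Or.inr (Or.inr ⟨h1, h2⟩)
    refine ⟨hadj.toWalk, ?_, ?_⟩
    · have : (strongProd G H).dist x y = 1 := SimpleGraph.dist_eq_one_iff_adj.mpr hadj
      rw [this]
      rfl
    · intro v hv _
      simp only [Adj.toWalk, Walk.support_cons, Walk.support_nil, List.mem_cons,
        List.mem_singleton] at hv
      rcases hv with rfl | hv
      · exact Or.inl rfl
      · rcases hv with hv | hv
        · exact Or.inr hv
        · simp at hv
  · -- get a walk of length max a b with good support
    have key : ∃ w : (strongProd G H).Walk x y, w.length = max a b ∧
        ∀ v ∈ w.support, (v.1 ∈ SG ∨ v.2 ∈ SH) → v = x ∨ v = y := by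
      rcases le_or_gt b a with hba | hab
      · have := my_prodWalk G H hG hH hntβ SG SH hSG hSH x.1 y.1 x.2 y.2
          (by omega) (by omega)
        obtain ⟨w, hwl, hws⟩ := this
        refine ⟨w.copy rfl rfl, by simp [hwl]; omega, ?_⟩
        intro v hv hmem
        rw [Walk.support_copy] at hv
        rcases hws v hv hmem with h | h
        · exact Or.inl (by rw [h])
        · exact Or.inr (by rw [h])
      · have := my_prodWalk H G hH hG hntα SH SG hSH hSG x.2 y.2 x.1 y.1
          (by omega) (by omega)
        obtain ⟨w, hwl, hws⟩ := this
        refine ⟨((w.map (mySwapHom G H)).copy (show (mySwapHom G H) (x.2, x.1) = x from rfl) (show (mySwapHom G H) (y.2, y.1) = y from rfl)),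
          ?_, ?_⟩
        · rw [Walk.length_copy, Walk.length_map, hwl]; omega
        · intro v hv hmem
          rw [Walk.support_copy, Walk.support_map, List.mem_map] at hv
          obtain ⟨u, hu, huv⟩ := hv
          have : u.1 ∈ SH ∨ u.2 ∈ SG := by
            rcases hmem with hm | hm
            · right; rwa [← huv] at hm
            · left; rwa [← huv] at hm
          rcases hws u hu (by tauto) with h | h
          · left; rw [← huv, h]; rfl
          · right; rw [← huv, h]; rfl
    obtain ⟨w, hwl, hws⟩ := key
    have hdist : (strongProd G H).dist x y = max a b := by
      have hle : (strongProd G H).dist x y ≤ max a b := by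
        have := SimpleGraph.dist_le w
        omega
      have hreach : (strongProd G H).Reachable x y := ⟨w⟩
      obtain ⟨w0, hw0⟩ := hreach.exists_walk_length_eq_dist
      have := my_dist_proj_le hG hH w0
      omega
    refine ⟨w, by omega, ?_⟩
    intro v hv hmem
    exact hws v hv ((hmemS v).mp hmem)

end AuxLemmas

theorem stmt_7 {α β : Type*} [Fintype α] [Fintype β]
    (G : SimpleGraph α) (H : SimpleGraph β) (hG : G.Connected) (hH : H.Connected)
    (hα : 2 ≤ Fintype.card α) (hβ : 2 ≤ Fintype.card β)
    (SG : Set α) (SH : Set β)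
    (hSG : IsFeasibleTMVSet G SG) (hSH : IsFeasibleTMVSet H SH) :
    IsFeasibleTMVSet (strongProd G H) ((SGᶜ ×ˢ SHᶜ)ᶜ) ∧
    SG.ncard * Fintype.card β + SH.ncard * Fintype.card α - SG.ncard * SH.ncard
      ≤ ((SGᶜ ×ˢ SHᶜ)ᶜ : Set (α × β)).ncard := by
  have hntα : Nontrivial α := Fintype.one_lt_card_iff_nontrivial.mp (by omega)
  have hntβ : Nontrivial β := Fintype.one_lt_card_iff_nontrivial.mp (by omega)
  constructor
  · constructor
    · intro x y
      exact my_visible_prod G H hG hH hntα hntβ SG SH hSG hSH x y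
    · intro x hx y hy hadj
      have hrelG : x.1 = y.1 ∨ G.Adj x.1 y.1 := by
        rcases hadj with ⟨h1, h2⟩ | ⟨h1, h2⟩ | ⟨h1, h2⟩ <;> tauto
      have hrelH : x.2 = y.2 ∨ H.Adj x.2 y.2 := by
        rcases hadj with ⟨h1, h2⟩ | ⟨h1, h2⟩ | ⟨h1, h2⟩ <;> tauto
      obtain ⟨z1, hz1, hz1x, hz1y⟩ := my_pair_out hG hntα hSG x.1 y.1 hrelG
      obtain ⟨z2, hz2, hz2x, hz2y⟩ := my_pair_out hH hntβ hSH x.2 y.2 hrelH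
      simp only [Set.mem_compl_iff, Set.mem_prod, not_and_or, not_not] at hx hy
      refine ⟨(z1, z2), ?_, ?_, ?_⟩
      · simp only [Set.mem_compl_iff, Set.mem_prod, not_and_or, not_not, not_or]
        exact ⟨hz1, hz2⟩
      · rcases hz1x with h1 | h1 <;> rcases hz2x with h2 | h2
        · exfalso
          rw [← h1, ← h2] at hx
          tauto
        · exact Or.inr (Or.inl ⟨h1.symm, h2⟩)
        · exact Or.inl ⟨h1, h2.symm⟩
        · exact Or.inr (Or.inr ⟨h1, h2⟩)
      · rcases hz1y with h1 | h1 <;> rcases hz2y with h2 | h2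
        · exfalso
          rw [← h1, ← h2] at hy
          tauto
        · exact Or.inr (Or.inl ⟨h1.symm, h2⟩)
        · exact Or.inl ⟨h1, h2.symm⟩
        · exact Or.inr (Or.inr ⟨h1, h2⟩)
  · -- cardinality
    set s := SG.ncard with hs
    set t := SH.ncard with ht
    have hcG : SG.ncard + SGᶜ.ncard = Fintype.card α := by
      rw [Set.ncard_add_ncard_compl, Nat.card_eq_fintype_card]
    have hcH : SH.ncard + SHᶜ.ncard = Fintype.card β := by
      rw [Set.ncard_add_ncard_compl, Nat.card_eq_fintype_card]
    have hprod : (SGᶜ ×ˢ SHᶜ).ncard = SGᶜ.ncard * SHᶜ.ncard := by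
      rw [← Nat.card_coe_set_eq, ← Nat.card_coe_set_eq, ← Nat.card_coe_set_eq]
      rw [Nat.card_congr (Equiv.Set.prod _ _), Nat.card_prod]
    have hbig : (SGᶜ ×ˢ SHᶜ).ncard + ((SGᶜ ×ˢ SHᶜ)ᶜ : Set (α × β)).ncard
        = Fintype.card α * Fintype.card β := by
      rw [Set.ncard_add_ncard_compl, Nat.card_eq_fintype_card, Fintype.card_prod]
    set u := SGᶜ.ncard with hu
    set v := SHᶜ.ncard with hv
    have hA : Fintype.card α = s + u := by omega
    have hB : Fintype.card β = t + v := by omega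
    rw [hA, hB, Nat.sub_le_iff_le_add]
    have e2 : u * v + ((SGᶜ ×ˢ SHᶜ)ᶜ : Set (α × β)).ncard = (s + u) * (t + v) := by
      rw [← hprod, hbig, hA, hB]
    nlinarith [e2]
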